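/- Let B₀ be a complete discrete valuation ring with uniformizer π. Let V → W → Q → 0 be an exact sequence of B₀-modules where V is π-adically complete, W is π-adically separated (⋂ₙ πⁿW = 0), and Q ⊗_{B₀} (B₀/πB₀) is finitely generated. Then Q is a finitely generated B₀-module. -/

import Mathlib

open Function Pointwise
/-- Let `B₀` be a complete discrete valuation ring with uniformizer `π`.
Let `V → W → Q → 0` be an exact sequence of `B₀`-modules, with `V` `π`-adically complete,
`W` `π`-adically separated, and `Q ⊗ (B₀/πB₀) = Q/πQ` finitely generated.  Then `Q` is a
finitely generated `B₀`-module. -/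
theorem statement7 (B₀ : Type) [CommRing B₀] [IsDomain B₀] [IsDiscreteValuationRing B₀]
    (π : B₀) (hπ : Irreducible π)
    [IsAdicComplete (Ideal.span {π}) B₀]
    (V W Q : Type) [AddCommGroup V] [Module B₀ V] [AddCommGroup W] [Module B₀ W]
    [AddCommGroup Q] [Module B₀ Q]
    [IsAdicComplete (Ideal.span {π}) V] [IsHausdorff (Ideal.span {π}) W]
    (φ : V →ₗ[B₀] W) (ψ : W →ₗ[B₀] Q)
    (hsurj : Surjective ψ) (hexact : LinearMap.range φ = LinearMap.ker ψ)
    (hfg : Module.Finite B₀ (Q ⧸ (π • (⊤ : Submodule B₀ Q)))) :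
    Module.Finite B₀ Q := by
  classical
  set I : Ideal B₀ := Ideal.span {π} with hIdef
  have hπI : π ∈ I := Ideal.subset_span rfl
  have hsm : ∀ m : ℕ, (I ^ m • ⊤ : Submodule B₀ B₀) = I ^ m := fun m => by
    rw [smul_eq_mul, Ideal.mul_top]
  set N : Submodule B₀ Q := π • (⊤ : Submodule B₀ Q) with hNdef
  -- extract generators of Q/πQ and lift them
  obtain ⟨t, ht⟩ : (⊤ : Submodule B₀ (Q ⧸ N)).FG := hfg.fg_top
  set s : Finset Q := t.image (surjInv (Submodule.mkQ_surjective N)) with hsdef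
  set p : Submodule B₀ Q := Submodule.span B₀ (↑s : Set Q) with hpdef
  have hmap : Submodule.map N.mkQ p = ⊤ := by
    rw [hpdef, Submodule.map_span, ← ht]
    congr 1
    rw [hsdef, Finset.coe_image, ← Set.image_comp]
    ext x
    simp [Function.comp, surjInv_eq (Submodule.mkQ_surjective N)]
  have hps : p ⊔ N = ⊤ := by
    have := congrArg (Submodule.comap N.mkQ) hmap
    rwa [Submodule.comap_map_eq, Submodule.ker_mkQ, Submodule.comap_top] at this
  -- lifts of generators to W
  set g : Q → W := surjInv hsurj with hgdef
  have hg : ∀ i, ψ (g i) = i := fun i => surjInv_eq hsurj i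
  -- the approximation step
  have step : ∀ w : W, ∃ (a : Q → B₀) (w' : W) (v : V),
      w = (∑ i ∈ s, a i • g i) + π • w' + φ v := by
    intro w
    have hq : ψ w ∈ p ⊔ N := by rw [hps]; trivial
    obtain ⟨x, hx, y, hy, hxy⟩ := Submodule.mem_sup.1 hq
    obtain ⟨a, -, ha⟩ := Submodule.mem_span_finset.1 hx
    obtain ⟨r, hr⟩ : ∃ r : Q, π • r = y := by
      have h' : y ∈ (π • ((⊤ : Submodule B₀ Q) : Set Q)) := by
        rw [← Submodule.coe_pointwise_smul]; exact hy
      obtain ⟨r, -, hr⟩ := h'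
      exact ⟨r, hr⟩
    have hker : w - (∑ i ∈ s, a i • g i) - π • g r ∈ LinearMap.ker ψ := by
      rw [LinearMap.mem_ker]
      simp only [map_sub, map_sum, map_smul, hg]
      rw [ha, hr, ← hxy]
      abel
    rw [← hexact] at hker
    obtain ⟨v, hv⟩ := hker
    refine ⟨a, g r, v, ?_⟩
    rw [hv]
    abel
  choose A Wn Vn hstep using step
  -- main claim: every element of Q lies in p
  have key : ∀ w₀ : W, ψ w₀ ∈ p := by
    intro w₀
    set ws : ℕ → W := fun k => Nat.rec w₀ (fun _ ih => Wn ih) k with hws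
    have hwss : ∀ k, ws (k + 1) = Wn (ws k) := fun _ => rfl
    set c : ℕ → Q → B₀ := fun n i => ∑ k ∈ Finset.range n, π ^ k * A (ws k) i with hc
    set u : ℕ → V := fun n => ∑ k ∈ Finset.range n, π ^ k • Vn (ws k) with hu
    have hrep : ∀ n, w₀ = (∑ i ∈ s, c n i • g i) + π ^ n • ws n + φ (u n) := by
      intro n
      induction n with
      | zero => simp [hc, hu, hws]
      | succ n ih =>
        rw [ih]
        conv_lhs => rw [hstep (ws n)]
        rw [hwss]
        simp only [hc, hu, Finset.sum_range_succ, add_smul, Finset.sum_add_distrib,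
          map_add, map_smul, mul_smul, pow_succ, smul_add, Finset.smul_sum]
        abel
    -- Cauchy sequences of coefficients
    have hccau : ∀ i : Q, ∃ L : B₀, ∀ n, c n i ≡ L [SMOD (I ^ n • ⊤ : Submodule B₀ B₀)] := by
      intro i
      refine IsPrecomplete.prec inferInstance ?_
      intro m n hmn
      rw [SModEq.sub_mem, hsm]
      have hd : c m i - c n i = -∑ k ∈ Finset.Ico m n, π ^ k * A (ws k) i := by
        rw [Finset.sum_Ico_eq_sub _ hmn, hc]
        ring
      rw [hd]
      refine neg_mem (Submodule.sum_mem _ fun k hk => ?_)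
      exact Ideal.pow_le_pow_right (Finset.mem_Ico.1 hk).1
        (Ideal.mul_mem_right _ _ (Ideal.pow_mem_pow hπI k))
    choose cL hcL using hccau
    have hucau : ∃ L : V, ∀ n, u n ≡ L [SMOD (I ^ n • ⊤ : Submodule B₀ V)] := by
      refine IsPrecomplete.prec inferInstance ?_
      intro m n hmn
      rw [SModEq.sub_mem]
      have hd : u m - u n = -∑ k ∈ Finset.Ico m n, π ^ k • Vn (ws k) := by
        rw [Finset.sum_Ico_eq_sub _ hmn, hu]
        abel
      rw [hd]
      refine neg_mem (Submodule.sum_mem _ fun k hk => ?_)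
      exact Submodule.smul_mem_smul
        (Ideal.pow_le_pow_right (Finset.mem_Ico.1 hk).1 (Ideal.pow_mem_pow hπI k)) trivial
    obtain ⟨uL, huL⟩ := hucau
    -- pass to the limit using separatedness of W
    have hfinal : w₀ = (∑ i ∈ s, cL i • g i) + φ uL := by
      rw [← sub_eq_zero]
      refine IsHausdorff.haus (inferInstance : IsHausdorff I W) _ (fun n => ?_)
      rw [SModEq.zero]
      have hd : w₀ - ((∑ i ∈ s, cL i • g i) + φ uL)
          = (∑ i ∈ s, (c n i - cL i) • g i) + π ^ n • ws n + φ (u n - uL) := by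
        conv_lhs => rw [hrep n]
        simp only [sub_smul, Finset.sum_sub_distrib, map_sub]
        abel
      rw [hd]
      refine Submodule.add_mem _ (Submodule.add_mem _ ?_ ?_) ?_
      · refine Submodule.sum_mem _ fun i _ => Submodule.smul_mem_smul ?_ trivial
        have := (SModEq.sub_mem).1 (hcL i n)
        rwa [hsm] at this
      · exact Submodule.smul_mem_smul (Ideal.pow_mem_pow hπI n) trivial
      · have hm : u n - uL ∈ (I ^ n • ⊤ : Submodule B₀ V) := (SModEq.sub_mem).1 (huL n)
        have hx : φ (u n - uL) ∈ Submodule.map φ (I ^ n • ⊤) := Submodule.mem_map_of_mem hm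
        rw [Submodule.map_smul''] at hx
        exact Submodule.smul_mono le_rfl le_top hx
    rw [hfinal]
    have hφ : ψ (φ uL) = 0 := by
      have : φ uL ∈ LinearMap.ker ψ := hexact ▸ LinearMap.mem_range_self φ uL
      exact this
    simp only [map_add, map_sum, map_smul, hg, hφ, add_zero]
    exact Submodule.sum_mem _ fun i hi => Submodule.smul_mem _ _ (Submodule.subset_span hi)
  have htop : Submodule.span B₀ (↑s : Set Q) = ⊤ := by
    rw [← hpdef, eq_top_iff]
    rintro q -
    obtain ⟨w₀, rfl⟩ := hsurj q
    exact key w₀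
  exact ⟨⟨s, htop⟩⟩
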